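/- Let R be a commutative ring and G, G' two finitely generated Gabriel topologies (filters of ideals with a basis of finitely generated ideals, closed under products). If G and G' contain the same prime ideals, then G = G'. -/
import Mathlib

private lemma aux_subset {R : Type*} [CommRing R]
    (G G' : Set (Ideal R))
    (hne' : G'.Nonempty)
    (hup : ∀ I ∈ G, ∀ J : Ideal R, I ≤ J → J ∈ G)
    (hup' : ∀ I ∈ G', ∀ J : Ideal R, I ≤ J → J ∈ G')
    (hbasis' : ∀ I ∈ G', ∃ J ∈ G', J ≤ I ∧ J.FG)
    (hmul' : ∀ I ∈ G', ∀ J ∈ G', I * J ∈ G')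
    (hp : ∀ p : Ideal R, p.IsPrime → p ∈ G → p ∈ G') : G ⊆ G' := by
  intro I hI
  by_contra hI'
  have htop : (⊤ : Ideal R) ∈ G' := by
    obtain ⟨K, hK⟩ := hne'; exact hup' K hK ⊤ le_top
  -- Zorn's lemma on the set of ideals containing I and not in G'
  obtain ⟨p, hIp, hpS, hpmax⟩ :
      ∃ p, I ≤ p ∧ p ∉ G' ∧ ∀ q : Ideal R, q ∉ G' → p ≤ q → q ≤ p := by
    obtain ⟨p, hIp, hmax⟩ := zorn_le_nonempty₀ {J : Ideal R | J ∉ G'}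
      (fun c hc hchain y hyc => by
        refine ⟨sSup c, ?_, fun z hz => le_sSup hz⟩
        intro hsup
        obtain ⟨J, hJ, hJle, hJfg⟩ := hbasis' (sSup c) hsup
        have hcomp := (CompleteLattice.isCompactElement_iff_le_of_directed_sSup_le
          (Ideal R) J).mp ((Submodule.fg_iff_compact J).mp hJfg)
        obtain ⟨K, hKc, hJK⟩ := hcomp c ⟨y, hyc⟩ hchain.directedOn hJle
        exact hc hKc (hup' J hJ K hJK)) I hI'
    exact ⟨p, hIp, hmax.1, fun q hq hpq => hmax.2 hq hpq⟩
  have hpprime : p.IsPrime := by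
    constructor
    · rintro rfl; exact hpS htop
    · intro x y hxy
      by_contra hxyp
      push_neg at hxyp
      obtain ⟨hx, hy⟩ := hxyp
      have key : ∀ z : R, z ∉ p → p ⊔ Ideal.span {z} ∈ G' := by
        intro z hz
        by_contra h
        exact hz (hpmax _ h le_sup_left
          (Submodule.mem_sup_right (Ideal.mem_span_singleton_self z)))
      have hprod : (p ⊔ Ideal.span {x}) * (p ⊔ Ideal.span {y}) ∈ G' :=
        hmul' _ (key x hx) _ (key y hy)
      have hle : (p ⊔ Ideal.span {x}) * (p ⊔ Ideal.span {y}) ≤ p := by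
        rw [Ideal.mul_le]
        intro r hr s hs
        obtain ⟨a, ha, b, hb, rfl⟩ := Submodule.mem_sup.mp hr
        obtain ⟨c, rfl⟩ := Ideal.mem_span_singleton'.mp hb
        obtain ⟨a', ha', b', hb', rfl⟩ := Submodule.mem_sup.mp hs
        obtain ⟨c', rfl⟩ := Ideal.mem_span_singleton'.mp hb'
        have : (a + c * x) * (a' + c' * y)
            = a * (a' + c' * y) + (c * x) * a' + (c * c') * (x * y) := by ring
        rw [this]
        exact Ideal.add_mem _ (Ideal.add_mem _ (Ideal.mul_mem_right _ _ ha)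
          (Ideal.mul_mem_left _ _ ha')) (Ideal.mul_mem_left _ _ hxy)
      exact hpS (hup' _ hprod p hle)
  exact hpS (hp p hpprime (hup I hI p hIp))

/-- Let `R` be a commutative ring and `G`, `G'` two finitely
generated Gabriel topologies (nonempty filters of ideals with a basis of
finitely generated ideals, closed under ideal products).  If `G` and `G'`
contain the same prime ideals, then `G = G'`. -/
theorem fg_gabriel_topology_eq_of_same_primes {R : Type*} [CommRing R]
    (G G' : Set (Ideal R))
    (hne : G.Nonempty) (hne' : G'.Nonempty)
    (hup : ∀ I ∈ G, ∀ J : Ideal R, I ≤ J → J ∈ G)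
    (hup' : ∀ I ∈ G', ∀ J : Ideal R, I ≤ J → J ∈ G')
    (hinter : ∀ I ∈ G, ∀ J ∈ G, I ⊓ J ∈ G)
    (hinter' : ∀ I ∈ G', ∀ J ∈ G', I ⊓ J ∈ G')
    (hbasis : ∀ I ∈ G, ∃ J ∈ G, J ≤ I ∧ J.FG)
    (hbasis' : ∀ I ∈ G', ∃ J ∈ G', J ≤ I ∧ J.FG)
    (hmul : ∀ I ∈ G, ∀ J ∈ G, I * J ∈ G)
    (hmul' : ∀ I ∈ G', ∀ J ∈ G', I * J ∈ G')
    (hprimes : ∀ p : Ideal R, p.IsPrime → (p ∈ G ↔ p ∈ G')) :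
    G = G' := by
  apply Set.Subset.antisymm
  · exact aux_subset G G' hne' hup hup' hbasis' hmul'
      (fun p hpr hpG => (hprimes p hpr).mp hpG)
  · exact aux_subset G' G hne hup' hup hbasis hmul
      (fun p hpr hpG' => (hprimes p hpr).mpr hpG')
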